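/- Suppose H_{i-1} is consistent with Q_{i-1}, i.e., ⟨H_{i-1}(s,a), R⟩ = Q_{i-1}(s,a) for all (s,a). If the Q-learning update Q_i(s_t,a_t) = Q_{i-1}(s_t,a_t) + α(r_t + γ Q_{i-1}(s_{t+1}, m) − Q_{i-1}(s_t,a_t)) with m = argmax_a Q_{i-1}(s_{t+1},a) and r_t = R(s_t,a_t), and the belief-map update H_i(s_t,a_t) = H_{i-1}(s_t,a_t) + α(1_{(s_t,a_t)} + γ H_{i-1}(s_{t+1}, m) − H_{i-1}(s_t,a_t)) are performed simultaneously (with all other entries unchanged), then ⟨H_i(s,a), R⟩ = Q_i(s,a) for all (s,a); i.e., consistency is preserved by one step of the coupled Q-learning/belief-map update. -/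
import Mathlib


/-- Inner product of a belief-map entry with the reward map. -/
noncomputable def ip {S A : Type} [Fintype S] [Fintype A] [DecidableEq S] [DecidableEq A]
    (v R : S × A → ℝ) : ℝ := ∑ q, v q * R q

/-- One coupled Q-learning / belief-map update preserves consistency. -/
theorem consistency_step {S A : Type} [Fintype S] [Fintype A] [DecidableEq S] [DecidableEq A]
    (R Q : S × A → ℝ) (H : S × A → S × A → ℝ) (α γ : ℝ)
    (st : S) (at_ : A) (st' : S) (m : A)
    (hm : ∀ a : A, Q (st', a) ≤ Q (st', m))
    (hcons : ∀ p : S × A, ip (H p) R = Q p)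
    (Q' : S × A → ℝ)
    (hQ' : Q' = fun p => if p = (st, at_) then
        Q (st, at_) + α * (R (st, at_) + γ * Q (st', m) - Q (st, at_)) else Q p)
    (H' : S × A → S × A → ℝ)
    (hH' : H' = fun p => if p = (st, at_) then
        fun q => H (st, at_) q +
          α * ((if q = (st, at_) then (1 : ℝ) else 0) + γ * H (st', m) q - H (st, at_) q)
      else H p) :
    ∀ p : S × A, ip (H' p) R = Q' p := by
  intro p
  subst hQ' hH'
  by_cases hp : p = (st, at_)
  · subst hp
    simp only [if_pos rfl, if_true, ip]
    rw [← hcons (st, at_), ← hcons (st', m)]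
    simp only [ip]
    rw [Finset.sum_congr rfl (fun q _ => by ring :
      ∀ q ∈ Finset.univ, (H (st, at_) q +
          α * ((if q = (st, at_) then (1:ℝ) else 0) + γ * H (st', m) q - H (st, at_) q)) * R q
        = H (st, at_) q * R q + α * ((if q = (st, at_) then (1:ℝ) else 0) * R q
            + γ * (H (st', m) q * R q) - H (st, at_) q * R q))]
    rw [Finset.sum_add_distrib, ← Finset.mul_sum, Finset.sum_sub_distrib,
      Finset.sum_add_distrib, ← Finset.mul_sum]
    simp [Finset.sum_ite_eq']
  · simp only [if_neg hp]
    exact hcons p
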